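/- Let c ≥ 1, l ∈ ℕ, and let 𝒯 be a finite set of templates. Every class of finite pointed labelled graphs (over a fixed finite proposition set) that is invariant under l-c-𝒯-bisimilarity (i.e., closed under the relation ∼^{l,c}_𝒯) is definable by a GML(𝒯) formula of modal depth l and counting bound c. -/

import Mathlib

set_option maxHeartbeats 1000000

attribute [local instance 10] Classical.propDecidable

/-- A template `T = (V, E⁺, E⁻, r)`: vertex set `Fin (n+1)` (cardinality `n+1`),
root `0`, edges `pos`, non-edges `neg`, with `pos ∩ neg = ∅`. -/
structure Template where
  n : ℕ
  pos : Finset (Fin (n + 1) × Fin (n + 1))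
  neg : Finset (Fin (n + 1) × Fin (n + 1))
  disj : ∀ p, ¬(p ∈ pos ∧ p ∈ neg)

/-- A labelled directed graph with labels in `Λ`: a finite vertex set (a finite
subset of `ℕ`), an edge relation `E ⊆ V × V`, and a labelling of the nodes. -/
structure LGraph (Λ : Type) where
  verts : Finset ℕ
  edge : ℕ → ℕ → Prop
  lab : ℕ → Λ
  edge_mem : ∀ u w, edge u w → u ∈ verts ∧ w ∈ verts

/-- `f` is a template embedding of `T` into the pointed graph `(G, w)`:
an injective map sending the root to `w`, `E⁺`-pairs to edges and `E⁻`-pairs to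
non-edges. -/
def IsEmb {Λ : Type} (T : Template) (G : LGraph Λ) (w : ℕ) (f : Fin (T.n + 1) → ℕ) : Prop :=
  Function.Injective f ∧ f 0 = w ∧ (∀ i, f i ∈ G.verts) ∧
    (∀ p ∈ T.pos, G.edge (f p.1) (f p.2)) ∧ (∀ p ∈ T.neg, ¬ G.edge (f p.1) (f p.2))

/-- The (finite) set `emb(T,(G,w))` of template embeddings of `T` into `(G, w)`. -/
noncomputable def embFinset {Λ : Type} (T : Template) (G : LGraph Λ) (w : ℕ) :
    Finset (Fin (T.n + 1) → ℕ) :=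
  (Fintype.piFinset fun _ : Fin (T.n + 1) => G.verts).filter (IsEmb T G w)

/-- Forth condition: any `k` pairwise distinct template embeddings of `T` at `(G,v)`
can be matched by `k` pairwise distinct embeddings at `(G',v')`, pointwise related
by `Z`. -/
def Forth {Λ : Type} (Z : ℕ → ℕ → Prop) (T : Template) (G G' : LGraph Λ)
    (v v' : ℕ) (k : ℕ) : Prop :=
  ∀ F : Fin k → (Fin (T.n + 1) → ℕ), Function.Injective F → (∀ i, IsEmb T G v (F i)) →
    ∃ F' : Fin k → (Fin (T.n + 1) → ℕ), Function.Injective F' ∧ (∀ i, IsEmb T G' v' (F' i)) ∧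
      ∀ i u, Z (F i u) (F' i u)

/-- `Z` is a graded `l`-`𝒯`-bisimulation between `G` and `G'`, where the allowed
multiplicities `k` in the back-and-forth conditions are those satisfying `P`. -/
def IsBisimP {Λ : Type} (𝒯 : Finset Template) (P : ℕ → Prop) (G G' : LGraph Λ) :
    ℕ → (ℕ → ℕ → Prop) → Prop
  | 0, Z => ∀ v v', Z v v' → G.lab v = G'.lab v'
  | l + 1, Z => ∃ Z', IsBisimP 𝒯 P G G' l Z' ∧
      ∀ v v', Z v v' → Z' v v' ∧ ∀ T ∈ 𝒯, ∀ k, P k →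
        Forth Z' T G G' v v' k ∧ Forth (fun a b => Z' b a) T G' G v' v k

/-- `(G,v)` and `(G',v')` are graded `l`-`𝒯`-bisimilar. -/
def GBisimilar {Λ : Type} (𝒯 : Finset Template) (l : ℕ) (G : LGraph Λ) (v : ℕ)
    (G' : LGraph Λ) (v' : ℕ) : Prop :=
  ∃ Z, IsBisimP 𝒯 (fun k => 1 ≤ k) G G' l Z ∧ Z v v'

/-- `(G,v)` and `(G',v')` are `l`-`c`-`𝒯`-bisimilar (multiplicities restricted to `k ≤ c`). -/
def BBisimilar {Λ : Type} (𝒯 : Finset Template) (l c : ℕ) (G : LGraph Λ) (v : ℕ)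
    (G' : LGraph Λ) (v' : ℕ) : Prop :=
  ∃ Z, IsBisimP 𝒯 (fun k => 1 ≤ k ∧ k ≤ c) G G' l Z ∧ Z v v'

/-- `A↾c`: cap all multiplicities of a multiset at `c`. -/
noncomputable def mcap {α : Type} (c : ℕ) (m : Multiset α) : Multiset α :=
  m.toFinset.val.bind fun a => Multiset.replicate (min c (m.count a)) a

/-- The `𝒯`-WL colouring of `G` after `l` rounds, using `hash0` for the initial
colouring and `hash` for the refinement rounds; at each round the new colour of `v`
hashes its previous colour together with, for each template `T ∈ 𝒯`, the multiset of
`T`-labelled colourings induced by the template embeddings at `v`. -/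
noncomputable def colWL {Λ C : Type} (𝒯 : Finset Template) (hash0 : Λ → C)
    (hash : C → ((T : {x // x ∈ 𝒯}) → Multiset (Fin (T.1.n + 1) → C)) → C)
    (G : LGraph Λ) : ℕ → ℕ → C
  | 0, v => hash0 (G.lab v)
  | l + 1, v =>
      hash (colWL 𝒯 hash0 hash G l v)
        (fun T => (embFinset T.1 G v).val.map
          (fun f => fun u => colWL 𝒯 hash0 hash G l (f u)))

/-- A multiset function is `c`-bounded if its value is unchanged when all
multiplicities larger than `c` are replaced by `c`. -/
def CBoundedFun {α β : Type} (c : ℕ) (g : Multiset α → β) : Prop :=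
  ∀ m, g m = g (mcap c m)

/-- An `nAr`-ary `L`-layer `𝒯`-GNN with feature dimension `d`: templates from `𝒯`,
template-aggregation functions (invariant under root-fixing label-preserving template
automorphisms), outer multiset aggregation functions, combination functions, and a
Boolean classification function. -/
structure TGNN (𝒯 : Finset Template) (d nAr L : ℕ) where
  temp : Fin L → Fin nAr → Template
  temp_mem : ∀ l j, temp l j ∈ 𝒯
  aggT : (l : Fin L) → (j : Fin nAr) → ((Fin ((temp l j).n + 1) → (Fin d → ℝ)) → (Fin d → ℝ))
  aggT_inv : ∀ (l : Fin L) (j : Fin nAr) (σ : Equiv.Perm (Fin ((temp l j).n + 1)))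
      (lab₁ lab₂ : Fin ((temp l j).n + 1) → (Fin d → ℝ)),
      σ 0 = 0 →
      (∀ p : Fin ((temp l j).n + 1) × Fin ((temp l j).n + 1),
        p ∈ (temp l j).pos ↔ (σ p.1, σ p.2) ∈ (temp l j).pos) →
      (∀ p : Fin ((temp l j).n + 1) × Fin ((temp l j).n + 1),
        p ∈ (temp l j).neg ↔ (σ p.1, σ p.2) ∈ (temp l j).neg) →
      (∀ u, u ≠ 0 → lab₁ u = lab₂ (σ u)) →
      aggT l j lab₁ = aggT l j lab₂
  agg : Fin L → Fin nAr → Multiset (Fin d → ℝ) → (Fin d → ℝ)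
  comb : Fin L → (Fin d → ℝ) → (Fin nAr → (Fin d → ℝ)) → (Fin d → ℝ)
  cls : (Fin d → ℝ) → Bool

/-- The feature vector `λ^l(v)` of node `v` after `l` layers of the `𝒯`-GNN `N` on
input graph `G`. -/
noncomputable def TGNN.feat {𝒯 : Finset Template} {d nAr L : ℕ} (N : TGNN 𝒯 d nAr L)
    (G : LGraph (Fin d → ℝ)) : ℕ → ℕ → (Fin d → ℝ)
  | 0, v => G.lab v
  | l + 1, v =>
      if h : l < L then
        N.comb ⟨l, h⟩ (N.feat G l v)
          (fun j => N.agg ⟨l, h⟩ j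
            ((embFinset (N.temp ⟨l, h⟩ j) G v).val.map
              (fun f => N.aggT ⟨l, h⟩ j (fun u => N.feat G l (f u)))))
      else fun _ => 0

/-- A `𝒯`-GNN is `c`-bounded if all its outer aggregation functions are `c`-bounded. -/
def TGNN.IsCBounded {𝒯 : Finset Template} {d nAr L : ℕ} (N : TGNN 𝒯 d nAr L) (c : ℕ) : Prop :=
  ∀ l j, CBoundedFun c (N.agg l j)

def boolToReal (b : Bool) : ℝ := if b then 1 else 0

/-- Identify a `{0,1}^d`-labelled graph with a real-vector labelled graph. -/
def LGraph.toReal {d : ℕ} (G : LGraph (Fin d → Bool)) : LGraph (Fin d → ℝ) :=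
  ⟨G.verts, G.edge, fun v i => boolToReal (G.lab v i), G.edge_mem⟩

/-- Initialize real feature vectors of dimension `d'` from `{0,1}^a`-labels
(the first `a` coordinates hold the truth values of the propositions, the rest are `0`). -/
def initG {a : ℕ} (d' : ℕ) (G : LGraph (Fin a → Bool)) : LGraph (Fin d' → ℝ) :=
  ⟨G.verts, G.edge, fun v i => if h : (i : ℕ) < a then boolToReal (G.lab v ⟨i, h⟩) else 0,
    G.edge_mem⟩

/-- Formulae of graded template modal logic `GML(𝒯)` over propositions `AP`
(`⊤` included; a modality `⟨T⟩^{≥j}(φ₁,…,φ_{n_T})` takes `n_T = |V_T| - 1` arguments). -/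
inductive GML (AP : Type) : Type
  | top : GML AP
  | prop : AP → GML AP
  | neg : GML AP → GML AP
  | and : GML AP → GML AP → GML AP
  | dia : (T : Template) → ℕ → (Fin T.n → GML AP) → GML AP

/-- Semantics of `GML(𝒯)` on pointed labelled graphs:
`(G,v) ⊨ ⟨T⟩^{≥j}(φ⃗)` iff at least `j` embeddings `f ∈ emb(T,(G,v))` satisfy
`(G, f(i)) ⊨ φᵢ` for all `1 ≤ i ≤ n_T`. -/
def Sat {AP : Type} (G : LGraph (AP → Bool)) : GML AP → ℕ → Prop
  | .top, _ => True
  | .prop p, v => G.lab v p = true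
  | .neg φ, v => ¬ Sat G φ v
  | .and φ ψ, v => Sat G φ v ∧ Sat G ψ v
  | .dia T j φs, v =>
      j ≤ ((embFinset T G v).filter
        (fun f => ∀ i : Fin T.n, Sat G (φs i) (f i.succ))).card

/-- Modal depth. -/
def GML.md {AP : Type} : GML AP → ℕ
  | .top => 0
  | .prop _ => 0
  | .neg φ => φ.md
  | .and φ ψ => max φ.md ψ.md
  | .dia _ _ φs => 1 + Finset.univ.sup fun i => (φs i).md

/-- Counting bound: the least `c` such that every modality `⟨T⟩^{≥j}` occurring in the
formula has `j ≤ c`. -/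
def GML.cb {AP : Type} : GML AP → ℕ
  | .top => 0
  | .prop _ => 0
  | .neg φ => φ.cb
  | .and φ ψ => max φ.cb ψ.cb
  | .dia _ j φs => max j (Finset.univ.sup fun i => (φs i).cb)

/-- Syntactic depth: counts both Boolean connectives and modalities along the deepest
branch of the syntax tree. -/
def GML.sd {AP : Type} : GML AP → ℕ
  | .top => 0
  | .prop _ => 0
  | .neg φ => 1 + φ.sd
  | .and φ ψ => 1 + max φ.sd ψ.sd
  | .dia _ _ φs => 1 + Finset.univ.sup fun i => (φs i).sd

/-- Well-formedness of a `GML(𝒯)` formula: all templates come from `𝒯` and all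
grades satisfy `j ≥ 1`. -/
def GML.Wf {AP : Type} (𝒯 : Finset Template) : GML AP → Prop
  | .top => True
  | .prop _ => True
  | .neg φ => φ.Wf 𝒯
  | .and φ ψ => φ.Wf 𝒯 ∧ ψ.Wf 𝒯
  | .dia T j φs => T ∈ 𝒯 ∧ 1 ≤ j ∧ ∀ i, (φs i).Wf 𝒯

/-- Finite conjunction (`⊤` for the empty list). -/
def bigConj {AP : Type} : List (GML AP) → GML AP
  | [] => .top
  | φ :: rest => .and φ (bigConj rest)

/-- `|S^{(G,v)}_{T,φ⃗}|`: the number of embeddings `f ∈ emb(T,(G,v))` with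
`(G, f(i)) ⊨ φᵢ` for all `1 ≤ i ≤ n_T`. -/
noncomputable def Scard {AP : Type} (G : LGraph (AP → Bool)) (T : Template) (v : ℕ)
    (φs : Fin T.n → GML AP) : ℕ :=
  ((embFinset T G v).filter (fun f => ∀ i : Fin T.n, Sat G (φs i) (f i.succ))).card

/-- The `l`-characteristic formula `χ^l_{(G,v)}`. -/
noncomputable def charU {AP : Type} [Fintype AP] (𝒯 : Finset Template) :
    ℕ → LGraph (AP → Bool) → ℕ → GML AP
  | 0 => fun G v =>
      bigConj ((Finset.univ : Finset AP).toList.map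
        (fun p => if G.lab v p then GML.prop p else GML.neg (GML.prop p)))
  | l + 1 => fun G v =>
      GML.and (charU 𝒯 l G v)
        (bigConj (𝒯.toList.map (fun T =>
          GML.and
            (bigConj ((embFinset T G v).toList.map (fun f =>
              GML.dia T (Scard G T v (fun i => charU 𝒯 l G (f i.succ)))
                (fun i => charU 𝒯 l G (f i.succ)))))
            (GML.neg (GML.dia T (Scard G T v (fun _ => GML.top) + 1)
              (fun _ => GML.top))))))

/-- `reps m` is a system of representatives for the `m`-`c`-`𝒯`-bisimilarity classes of
finite pointed labelled graphs: every representative is a genuine pointed graph, every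
pointed graph is `m`-`c`-`𝒯`-bisimilar to some representative, and distinct
representatives are non-bisimilar. -/
def RepSystem {AP : Type} (𝒯 : Finset Template) (c : ℕ)
    (reps : ℕ → Finset (LGraph (AP → Bool) × ℕ)) : Prop :=
  ∀ m : ℕ,
    (∀ q ∈ reps m, q.2 ∈ q.1.verts) ∧
    (∀ (G : LGraph (AP → Bool)) (v : ℕ), v ∈ G.verts →
      ∃ q ∈ reps m, BBisimilar 𝒯 m c q.1 q.2 G v) ∧
    (∀ q ∈ reps m, ∀ q' ∈ reps m, BBisimilar 𝒯 m c q.1 q.2 q'.1 q'.2 → q = q')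

/-- The bounded `l`-`c`-characteristic formula `χ^{l,c}_{(G,v)}`, relative to a chosen
system `reps` of representatives of the bounded bisimilarity classes. -/
noncomputable def charB {AP : Type} [Fintype AP] (𝒯 : Finset Template) (c : ℕ)
    (reps : ℕ → Finset (LGraph (AP → Bool) × ℕ)) :
    ℕ → LGraph (AP → Bool) → ℕ → GML AP
  | 0 => fun G v =>
      bigConj ((Finset.univ : Finset AP).toList.map
        (fun p => if G.lab v p then GML.prop p else GML.neg (GML.prop p)))
  | l + 1 => fun G v =>
      GML.and (charB 𝒯 c reps l G v)
        (bigConj (𝒯.toList.map (fun T =>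
          GML.and
            (bigConj ((embFinset T G v).toList.map (fun f =>
              GML.dia T (min c (Scard G T v (fun i => charB 𝒯 c reps l G (f i.succ))))
                (fun i => charB 𝒯 c reps l G (f i.succ)))))
            (bigConj (((Fintype.piFinset (fun _ : Fin T.n => reps l)).filter
                (fun t => Scard G T v
                  (fun i => charB 𝒯 c reps l (t i).1 (t i).2) + 1 ≤ c)).toList.map
              (fun t => GML.neg (GML.dia T
                  (Scard G T v (fun i => charB 𝒯 c reps l (t i).1 (t i).2) + 1)
                  (fun i => charB 𝒯 c reps l (t i).1 (t i).2))))))))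

/-- Standard graded forth condition on out-neighbours. -/
def StdForth {Λ : Type} (Z : ℕ → ℕ → Prop) (G G' : LGraph Λ) (v v' : ℕ) (k : ℕ) : Prop :=
  ∀ us : Fin k → ℕ, Function.Injective us → (∀ i, G.edge v (us i)) →
    ∃ us' : Fin k → ℕ, Function.Injective us' ∧ (∀ i, G'.edge v' (us' i)) ∧
      ∀ i, Z (us i) (us' i)

/-- `Z` is a standard graded `l`-bisimulation (the relation underlying standard 1-WL
colour refinement). -/
def IsStdBisim {Λ : Type} (G G' : LGraph Λ) : ℕ → (ℕ → ℕ → Prop) → Prop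
  | 0, Z => ∀ v v', Z v v' → G.lab v = G'.lab v'
  | l + 1, Z => ∃ Z', IsStdBisim G G' l Z' ∧
      ∀ v v', Z v v' → Z' v v' ∧ ∀ k, 1 ≤ k →
        StdForth Z' G G' v v' k ∧ StdForth (fun a b => Z' b a) G' G v' v k

/-- `(G,v)` and `(G',v')` are standard graded `l`-bisimilar. -/
def StdBisimilar {Λ : Type} (l : ℕ) (G : LGraph Λ) (v : ℕ) (G' : LGraph Λ) (v' : ℕ) : Prop :=
  ∃ Z, IsStdBisim G G' l Z ∧ Z v v'

/-- The edge template `T₁ = ({r,a}, E⁺ = {(r,a)}, E⁻ = ∅, r)`. -/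
def T1 : Template := ⟨1, {(0, 1)}, ∅, by decide⟩

/-- The triangle template `T△ = ({r,a,b}, E⁺ = {(r,a),(a,b),(b,r)}, E⁻ = ∅, r)`. -/
def Ttri : Template := ⟨2, {(0, 1), (1, 2), (2, 0)}, ∅, by decide⟩

/-- The directed 3-cycle, all nodes with the same constant label. -/
def G3 : LGraph Unit where
  verts := {0, 1, 2}
  edge u w := (u = 0 ∧ w = 1) ∨ (u = 1 ∧ w = 2) ∨ (u = 2 ∧ w = 0)
  lab _ := ()
  edge_mem := by rintro u w (⟨rfl, rfl⟩ | ⟨rfl, rfl⟩ | ⟨rfl, rfl⟩) <;> simp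

/-- The directed 6-cycle, all nodes with the same constant label. -/
def G6 : LGraph Unit where
  verts := Finset.range 6
  edge u w := u < 6 ∧ w = (u + 1) % 6
  lab _ := ()
  edge_mem := by
    rintro u w ⟨hu, rfl⟩
    simp only [Finset.mem_range]
    omega
section Aux

lemma mem_embFinset {Λ : Type} {T : Template} {G : LGraph Λ} {w : ℕ}
    {f : Fin (T.n + 1) → ℕ} : f ∈ embFinset T G w ↔ IsEmb T G w f := by
  unfold embFinset
  rw [Finset.mem_filter]
  constructor
  · exact fun h => h.2
  · intro h
    exact ⟨by rw [Fintype.mem_piFinset]; exact h.2.2.1, h⟩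

lemma exists_match {α κ : Type} (c k : ℕ) (hk : k ≤ c) (A B : Finset α)
    (τA τB : α → κ)
    (hcount : ∀ t, min c ((A.filter fun a => τA a = t)).card
      = min c ((B.filter fun b => τB b = t)).card)
    (F : Fin k → α) (hF : Function.Injective F) (hFA : ∀ i, F i ∈ A) :
    ∃ F' : Fin k → α, Function.Injective F' ∧ (∀ i, F' i ∈ B) ∧
      ∀ i, τB (F' i) = τA (F i) := by
  classical
  set S : Finset α := Finset.univ.image F with hS
  have hSsub : S ⊆ A := by
    intro a ha
    obtain ⟨i, _, rfl⟩ := Finset.mem_image.mp ha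
    exact hFA i
  have hScard : S.card ≤ k := le_trans Finset.card_image_le (by simp)
  have key : ∀ t : κ, ∃ g : α → α,
      (∀ a ∈ S.filter (fun a => τA a = t), g a ∈ B.filter (fun b => τB b = t)) ∧
      (∀ a ∈ S.filter (fun a => τA a = t), ∀ b ∈ S.filter (fun a => τA a = t),
        g a = g b → a = b) := by
    intro t
    have h1 : (S.filter fun a => τA a = t).card ≤ (B.filter fun b => τB b = t).card := by
      have hA : (S.filter fun a => τA a = t).card ≤ (A.filter fun a => τA a = t).card :=
        Finset.card_le_card (Finset.filter_subset_filter _ hSsub)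
      have hc' : (S.filter fun a => τA a = t).card ≤ c :=
        le_trans (le_trans (Finset.card_filter_le _ _) hScard) hk
      have := hcount t
      omega
    obtain ⟨u, hu, hcard⟩ := Finset.exists_subset_card_eq h1
    have e := Finset.equivOfCardEq (hcard.symm)
    refine ⟨fun a => if h : a ∈ S.filter (fun a => τA a = t) then (e ⟨a, h⟩ : α) else a,
      ?_, ?_⟩
    · intro a ha
      simp only [dif_pos ha]
      exact hu (e ⟨a, ha⟩).2
    · intro a ha b hb hab
      simp only [dif_pos ha, dif_pos hb] at hab
      have := e.injective (Subtype.ext hab)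
      exact congrArg Subtype.val this
  choose g hg1 hg2 using key
  have hmem : ∀ i, F i ∈ S.filter (fun a => τA a = τA (F i)) := fun i =>
    Finset.mem_filter.mpr ⟨Finset.mem_image.mpr ⟨i, Finset.mem_univ i, rfl⟩, rfl⟩
  have hτ : ∀ i, τB (g (τA (F i)) (F i)) = τA (F i) := fun i =>
    (Finset.mem_filter.mp (hg1 _ _ (hmem i))).2
  refine ⟨fun i => g (τA (F i)) (F i), ?_, ?_, hτ⟩
  · intro i j hij
    simp only [] at hij
    have ht : τA (F i) = τA (F j) := by rw [← hτ i, ← hτ j, hij]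
    apply hF
    apply hg2 (τA (F i)) _ (hmem i) (F j)
    · rw [ht]; exact hmem j
    · rw [hij, ht]
  · intro i
    exact (Finset.mem_filter.mp (hg1 _ _ (hmem i))).1

end Aux

section TyDev

/-- Capped unravelling types of depth `l`. -/
def Ty (AP : Type) (𝒯 : Finset Template) (c : ℕ) : ℕ → Type
  | 0 => AP → Bool
  | l + 1 => Ty AP 𝒯 c l × ((T : {x // x ∈ 𝒯}) → (Fin T.1.n → Ty AP 𝒯 c l) → Fin (c + 1))

noncomputable instance instFintypeTy (AP : Type) [Fintype AP] (𝒯 : Finset Template)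
    (c : ℕ) : ∀ l, Fintype (Ty AP 𝒯 c l)
  | 0 => show Fintype (AP → Bool) from inferInstance
  | l + 1 => by
      letI := instFintypeTy AP 𝒯 c l
      show Fintype (Ty AP 𝒯 c l × ((T : {x // x ∈ 𝒯}) → (Fin T.1.n → Ty AP 𝒯 c l) → Fin (c + 1)))
      infer_instance

def capFin (c n : ℕ) : Fin (c + 1) := ⟨min c n, by omega⟩

@[simp] lemma capFin_val (c n : ℕ) : (capFin c n : ℕ) = min c n := rfl

/-- The capped `l`-type of a pointed graph. -/
noncomputable def typeOf {AP : Type} (𝒯 : Finset Template) (c : ℕ) :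
    ∀ l : ℕ, LGraph (AP → Bool) → ℕ → Ty AP 𝒯 c l
  | 0, G, v => G.lab v
  | l + 1, G, v =>
      Prod.mk (typeOf 𝒯 c l G v) (fun (T : {x // x ∈ 𝒯}) (t : Fin T.1.n → Ty AP 𝒯 c l) =>
        capFin c ((embFinset T.1 G v).filter
            (fun f => (fun i => typeOf 𝒯 c l G (f i.succ)) = t)).card)

lemma isBisim_typeOf {AP : Type} (𝒯 : Finset Template) (c : ℕ)
    (G G' : LGraph (AP → Bool)) :
    ∀ l, IsBisimP 𝒯 (fun k => 1 ≤ k ∧ k ≤ c) G G' l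
      (fun v v' => typeOf 𝒯 c l G v = typeOf 𝒯 c l G' v') := by
  intro l
  induction l with
  | zero =>
      intro v v' h
      exact h
  | succ l IH =>
      refine ⟨fun v v' => typeOf 𝒯 c l G v = typeOf 𝒯 c l G' v', IH, ?_⟩
      intro v v' h
      have hfst : typeOf 𝒯 c l G v = typeOf 𝒯 c l G' v' := congrArg Prod.fst h
      have hsnd : ∀ (T : {x // x ∈ 𝒯}) (t : Fin T.1.n → Ty AP 𝒯 c l),
          min c ((embFinset T.1 G v).filter
            (fun f => (fun i => typeOf 𝒯 c l G (f i.succ)) = t)).card =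
          min c ((embFinset T.1 G' v').filter
            (fun f => (fun i => typeOf 𝒯 c l G' (f i.succ)) = t)).card := by
        intro T t
        have h2 := congrFun (congrFun (congrArg Prod.snd h) T) t
        exact congrArg Fin.val h2
      refine ⟨hfst, ?_⟩
      intro T hT k hk
      constructor
      · intro F hF hFA
        obtain ⟨F', h1, h2, h3⟩ := exists_match c k hk.2 (embFinset T G v) (embFinset T G' v')
            (fun (f : Fin (T.n+1) → ℕ) (i : Fin T.n) => typeOf 𝒯 c l G (f i.succ))
            (fun (f : Fin (T.n+1) → ℕ) (i : Fin T.n) => typeOf 𝒯 c l G' (f i.succ))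
            (fun t => by have h0 := hsnd ⟨T, hT⟩ t; convert h0 using 4) F hF (fun i => mem_embFinset.mpr (hFA i))
        refine ⟨F', h1, fun i => mem_embFinset.mp (h2 i), ?_⟩
        intro i u
        refine Fin.cases ?_ ?_ u
        · rw [(hFA i).2.1, (mem_embFinset.mp (h2 i)).2.1]
          exact hfst
        · intro j
          exact (congrFun (h3 i) j).symm
      · intro F hF hFA
        obtain ⟨F', h1, h2, h3⟩ := exists_match c k hk.2 (embFinset T G' v') (embFinset T G v)
            (fun (f : Fin (T.n+1) → ℕ) (i : Fin T.n) => typeOf 𝒯 c l G' (f i.succ))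
            (fun (f : Fin (T.n+1) → ℕ) (i : Fin T.n) => typeOf 𝒯 c l G (f i.succ))
            (fun t => by have h0 := (hsnd ⟨T, hT⟩ t).symm; convert h0 using 4) F hF (fun i => mem_embFinset.mpr (hFA i))
        refine ⟨F', h1, fun i => mem_embFinset.mp (h2 i), ?_⟩
        intro i u
        refine Fin.cases ?_ ?_ u
        · rw [(hFA i).2.1, (mem_embFinset.mp (h2 i)).2.1]
          exact hfst
        · intro j
          exact congrFun (h3 i) j

end TyDev

section FormDev

variable {AP : Type}

lemma sat_bigConj {G : LGraph (AP → Bool)} {v : ℕ} :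
    ∀ {L : List (GML AP)}, Sat G (bigConj L) v ↔ ∀ ψ ∈ L, Sat G ψ v := by
  intro L
  induction L with
  | nil => simp [bigConj, Sat]
  | cons a L ih => simp [bigConj, Sat, ih]

lemma wf_bigConj {𝒯 : Finset Template} :
    ∀ {L : List (GML AP)}, (∀ ψ ∈ L, GML.Wf 𝒯 ψ) → (bigConj L).Wf 𝒯 := by
  intro L
  induction L with
  | nil => simp [bigConj, GML.Wf]
  | cons a L ih =>
      intro h
      refine ⟨h a (by simp), ih fun ψ hψ => h ψ (by simp [hψ])⟩

lemma md_bigConj {m : ℕ} :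
    ∀ {L : List (GML AP)}, (∀ ψ ∈ L, GML.md ψ ≤ m) → (bigConj L).md ≤ m := by
  intro L
  induction L with
  | nil => simp [bigConj, GML.md]
  | cons a L ih =>
      intro h
      simp only [bigConj, GML.md, max_le_iff]
      exact ⟨h a (by simp), ih fun ψ hψ => h ψ (by simp [hψ])⟩

lemma cb_bigConj {m : ℕ} :
    ∀ {L : List (GML AP)}, (∀ ψ ∈ L, GML.cb ψ ≤ m) → (bigConj L).cb ≤ m := by
  intro L
  induction L with
  | nil => simp [bigConj, GML.cb]
  | cons a L ih =>
      intro h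
      simp only [bigConj, GML.cb, max_le_iff]
      exact ⟨h a (by simp), ih fun ψ hψ => h ψ (by simp [hψ])⟩

/-- Finite disjunction. -/
def bigDisj (L : List (GML AP)) : GML AP := GML.neg (bigConj (L.map GML.neg))

lemma sat_bigDisj {G : LGraph (AP → Bool)} {v : ℕ} {L : List (GML AP)} :
    Sat G (bigDisj L) v ↔ ∃ ψ ∈ L, Sat G ψ v := by
  show ¬ _ ↔ _
  rw [sat_bigConj]
  constructor
  · intro h
    by_contra hne
    push_neg at hne
    exact h fun ψ hψ => by
      obtain ⟨φ, hφ, rfl⟩ := List.mem_map.mp hψ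
      exact hne φ hφ
  · rintro ⟨ψ, hψ, hs⟩ h
    exact h (GML.neg ψ) (List.mem_map.mpr ⟨ψ, hψ, rfl⟩) hs

lemma wf_bigDisj {𝒯 : Finset Template} {L : List (GML AP)}
    (h : ∀ ψ ∈ L, GML.Wf 𝒯 ψ) : (bigDisj L).Wf 𝒯 := by
  show GML.Wf 𝒯 (bigConj _)
  refine wf_bigConj fun ψ hψ => ?_
  obtain ⟨φ, hφ, rfl⟩ := List.mem_map.mp hψ
  exact h φ hφ

lemma md_bigDisj {m : ℕ} {L : List (GML AP)}
    (h : ∀ ψ ∈ L, GML.md ψ ≤ m) : (bigDisj L).md ≤ m := by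
  show GML.md (bigConj _) ≤ m
  refine md_bigConj fun ψ hψ => ?_
  obtain ⟨φ, hφ, rfl⟩ := List.mem_map.mp hψ
  exact h φ hφ

lemma cb_bigDisj {m : ℕ} {L : List (GML AP)}
    (h : ∀ ψ ∈ L, GML.cb ψ ≤ m) : (bigDisj L).cb ≤ m := by
  show GML.cb (bigConj _) ≤ m
  refine cb_bigConj fun ψ hψ => ?_
  obtain ⟨φ, hφ, rfl⟩ := List.mem_map.mp hψ
  exact h φ hφ

/-- The formula asserting that the `c`-capped number of embeddings of `T` whose
non-root images satisfy `φs` equals `j`. -/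
noncomputable def clause (T : Template) (j c : ℕ) (φs : Fin T.n → GML AP) : GML AP :=
  GML.and (if j = 0 then GML.top else GML.dia T j φs)
    (if j < c then GML.neg (GML.dia T (j + 1) φs) else GML.top)

lemma sat_clause {T : Template} {j c : ℕ} {φs : Fin T.n → GML AP}
    {G : LGraph (AP → Bool)} {v : ℕ} (hj : j ≤ c) :
    Sat G (clause T j c φs) v ↔
      min c ((embFinset T G v).filter
        (fun f => ∀ i : Fin T.n, Sat G (φs i) (f i.succ))).card = j := by
  unfold clause
  by_cases h0 : j = 0 <;> by_cases h1 : j < c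
  · rw [if_pos h0, if_pos h1]
    show True ∧ ¬ (j + 1 ≤ ((embFinset T G v).filter
        (fun f => ∀ i : Fin T.n, Sat G (φs i) (f i.succ))).card) ↔ min c ((embFinset T G v).filter
        (fun f => ∀ i : Fin T.n, Sat G (φs i) (f i.succ))).card = j
    simp only [true_and]
    generalize ((embFinset T G v).filter
        (fun f => ∀ i : Fin T.n, Sat G (φs i) (f i.succ))).card = N
    rw [min_def]
    split_ifs with hmin <;> constructor <;> intro hh <;> omega
  · rw [if_pos h0, if_neg h1]
    show True ∧ True ↔ min c ((embFinset T G v).filter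
        (fun f => ∀ i : Fin T.n, Sat G (φs i) (f i.succ))).card = j
    simp only [and_self, true_iff]
    generalize ((embFinset T G v).filter
        (fun f => ∀ i : Fin T.n, Sat G (φs i) (f i.succ))).card = N
    rw [min_def]
    split_ifs with hmin <;> omega
  · rw [if_neg h0, if_pos h1]
    show (j ≤ ((embFinset T G v).filter
        (fun f => ∀ i : Fin T.n, Sat G (φs i) (f i.succ))).card ∧ ¬ (j + 1 ≤ ((embFinset T G v).filter
        (fun f => ∀ i : Fin T.n, Sat G (φs i) (f i.succ))).card)) ↔ min c ((embFinset T G v).filter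
        (fun f => ∀ i : Fin T.n, Sat G (φs i) (f i.succ))).card = j
    generalize ((embFinset T G v).filter
        (fun f => ∀ i : Fin T.n, Sat G (φs i) (f i.succ))).card = N
    rw [min_def]
    split_ifs with hmin <;> constructor <;> intro hh <;> omega
  · rw [if_neg h0, if_neg h1]
    show (j ≤ ((embFinset T G v).filter
        (fun f => ∀ i : Fin T.n, Sat G (φs i) (f i.succ))).card ∧ True) ↔ min c ((embFinset T G v).filter
        (fun f => ∀ i : Fin T.n, Sat G (φs i) (f i.succ))).card = j
    simp only [and_true]
    generalize ((embFinset T G v).filter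
        (fun f => ∀ i : Fin T.n, Sat G (φs i) (f i.succ))).card = N
    rw [min_def]
    split_ifs with hmin <;> constructor <;> intro hh <;> omega

lemma md_clause {T : Template} {j c m : ℕ} {φs : Fin T.n → GML AP}
    (h : ∀ i, (φs i).md ≤ m) : (clause T j c φs).md ≤ m + 1 := by
  have hsup : (Finset.univ.sup fun i => (φs i).md) ≤ m := Finset.sup_le fun i _ => h i
  unfold clause
  split_ifs <;> simp [GML.md] <;> omega

lemma cb_clause {T : Template} {j c m : ℕ} {φs : Fin T.n → GML AP}
    (hj : j ≤ c) (hc : c ≤ m) (h : ∀ i, (φs i).cb ≤ m) : (clause T j c φs).cb ≤ m := by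
  have hsup : (Finset.univ.sup fun i => (φs i).cb) ≤ m := Finset.sup_le fun i _ => h i
  unfold clause
  split_ifs <;> simp only [GML.cb, max_le_iff] <;> omega

lemma wf_clause {𝒯 : Finset Template} {T : Template} {j c : ℕ} {φs : Fin T.n → GML AP}
    (hT : T ∈ 𝒯) (h : ∀ i, (φs i).Wf 𝒯) : (clause T j c φs).Wf 𝒯 := by
  unfold clause
  split_ifs with h0 h1 <;> simp_all [GML.Wf] <;> omega

/-- The characteristic formula of a capped `l`-type. -/
noncomputable def formOf (𝒯 : Finset Template) (c : ℕ) [Fintype AP] :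
    ∀ l : ℕ, Ty AP 𝒯 c l → GML AP
  | 0, τ => bigConj ((Finset.univ : Finset AP).toList.map
      (fun p => if τ p = true then GML.prop p else GML.neg (GML.prop p)))
  | l + 1, τ => GML.and (formOf 𝒯 c l τ.1)
      (bigConj ((Finset.univ :
          Finset (Σ T : {x // x ∈ 𝒯}, Fin T.1.n → Ty AP 𝒯 c l)).toList.map
        (fun Tt => clause Tt.1.1 (τ.2 Tt.1 Tt.2 : ℕ) c (fun i => formOf 𝒯 c l (Tt.2 i)))))

lemma sat_formOf (𝒯 : Finset Template) (c : ℕ) [Fintype AP] :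
    ∀ (l : ℕ) (τ : Ty AP 𝒯 c l) (G : LGraph (AP → Bool)) (v : ℕ),
      Sat G (formOf 𝒯 c l τ) v ↔ typeOf 𝒯 c l G v = τ := by
  intro l
  induction l with
  | zero =>
      intro τ G v
      show Sat G (bigConj _) v ↔ _
      rw [sat_bigConj]
      have step : ∀ p : AP,
          Sat G (if τ p = true then GML.prop p else GML.neg (GML.prop p)) v ↔
          G.lab v p = τ p := by
        intro p
        by_cases h : τ p = true <;> simp [Sat, h]
      constructor
      · intro h
        funext p
        exact (step p).mp (h _ (List.mem_map.mpr ⟨p, by simp, rfl⟩))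
      · intro h ψ hψ
        obtain ⟨p, _, rfl⟩ := List.mem_map.mp hψ
        exact (step p).mpr (congrFun h p)
  | succ l IH =>
      intro τ G v
      have hfilt : ∀ (T : Template) (t : Fin T.n → Ty AP 𝒯 c l),
          ((embFinset T G v).filter
            (fun f => ∀ i : Fin T.n, Sat G (formOf 𝒯 c l (t i)) (f i.succ))).card
          = ((embFinset T G v).filter
            (fun f => (fun i => typeOf 𝒯 c l G (f i.succ)) = t)).card := by
        intro T t
        apply congrArg Finset.card
        apply Finset.filter_congr
        intro f _
        simp only [IH, funext_iff]
      have hcl : ∀ (Tt : Σ T : {x // x ∈ 𝒯}, Fin T.1.n → Ty AP 𝒯 c l),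
          Sat G (clause Tt.1.1 ((τ.2 Tt.1 Tt.2 : Fin (c+1)) : ℕ) c
            (fun i => formOf 𝒯 c l (Tt.2 i))) v ↔
          min c ((embFinset Tt.1.1 G v).filter
            (fun f => (fun i => typeOf 𝒯 c l G (f i.succ)) = Tt.2)).card
            = ((τ.2 Tt.1 Tt.2 : Fin (c+1)) : ℕ) := by
        intro Tt
        rw [sat_clause (Fin.is_le _), hfilt]
      have hty : typeOf 𝒯 c (l + 1) G v = τ ↔
          (typeOf 𝒯 c l G v = τ.1 ∧
            ∀ (T : {x // x ∈ 𝒯}) (t : Fin T.1.n → Ty AP 𝒯 c l),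
              min c ((embFinset T.1 G v).filter
                (fun f => (fun i => typeOf 𝒯 c l G (f i.succ)) = t)).card
                = ((τ.2 T t : Fin (c+1)) : ℕ)) := by
        rw [show typeOf 𝒯 c (l + 1) G v = Prod.mk (typeOf 𝒯 c l G v)
          (fun (T : {x // x ∈ 𝒯}) (t : Fin T.1.n → Ty AP 𝒯 c l) =>
            capFin c ((embFinset T.1 G v).filter
              (fun f => (fun i => typeOf 𝒯 c l G (f i.succ)) = t)).card) from rfl]
        refine (Prod.ext_iff (x := (_ : Ty AP 𝒯 c l × ((T : {x // x ∈ 𝒯}) → (Fin T.1.n → Ty AP 𝒯 c l) → Fin (c + 1)))) (y := τ)).trans ?_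
        simp only [funext_iff, Fin.ext_iff, capFin_val]
      show Sat G (GML.and _ _) v ↔ _
      rw [show Sat G (GML.and (formOf 𝒯 c l τ.1) _) v ↔
        Sat G (formOf 𝒯 c l τ.1) v ∧ Sat G (bigConj _) v from Iff.rfl]
      rw [sat_bigConj, IH, hty]
      apply and_congr Iff.rfl
      constructor
      · intro h T t
        exact (hcl ⟨T, t⟩).mp (h _ (List.mem_map.mpr ⟨⟨T, t⟩, by simp, rfl⟩))
      · intro h ψ hψ
        obtain ⟨Tt, _, rfl⟩ := List.mem_map.mp hψ
        exact (hcl Tt).mpr (h Tt.1 Tt.2)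

lemma md_formOf (𝒯 : Finset Template) (c : ℕ) [Fintype AP] :
    ∀ (l : ℕ) (τ : Ty AP 𝒯 c l), (formOf 𝒯 c l τ).md ≤ l := by
  intro l
  induction l with
  | zero =>
      intro τ
      refine md_bigConj fun ψ hψ => ?_
      obtain ⟨p, _, rfl⟩ := List.mem_map.mp hψ
      by_cases h : τ p = true <;> simp [h, GML.md]
  | succ l IH =>
      intro τ
      show max _ _ ≤ l + 1
      refine max_le (le_trans (IH τ.1) (by omega)) (md_bigConj fun ψ hψ => ?_)
      obtain ⟨Tt, _, rfl⟩ := List.mem_map.mp hψ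
      exact md_clause fun i => IH (Tt.2 i)

lemma cb_formOf (𝒯 : Finset Template) (c : ℕ) [Fintype AP] :
    ∀ (l : ℕ) (τ : Ty AP 𝒯 c l), (formOf 𝒯 c l τ).cb ≤ c := by
  intro l
  induction l with
  | zero =>
      intro τ
      refine cb_bigConj fun ψ hψ => ?_
      obtain ⟨p, _, rfl⟩ := List.mem_map.mp hψ
      by_cases h : τ p = true <;> simp [h, GML.cb]
  | succ l IH =>
      intro τ
      show max _ _ ≤ c
      refine max_le (IH τ.1) (cb_bigConj fun ψ hψ => ?_)
      obtain ⟨Tt, _, rfl⟩ := List.mem_map.mp hψ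
      exact cb_clause (Fin.is_le _) le_rfl fun i => IH (Tt.2 i)

lemma wf_formOf (𝒯 : Finset Template) (c : ℕ) [Fintype AP] :
    ∀ (l : ℕ) (τ : Ty AP 𝒯 c l), (formOf 𝒯 c l τ).Wf 𝒯 := by
  intro l
  induction l with
  | zero =>
      intro τ
      refine wf_bigConj fun ψ hψ => ?_
      obtain ⟨p, _, rfl⟩ := List.mem_map.mp hψ
      by_cases h : τ p = true <;> simp [h, GML.Wf]
  | succ l IH =>
      intro τ
      refine ⟨IH τ.1, wf_bigConj fun ψ hψ => ?_⟩
      obtain ⟨Tt, _, rfl⟩ := List.mem_map.mp hψ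
      exact wf_clause Tt.1.2 fun i => IH (Tt.2 i)

end FormDev

/-- Every class of finite pointed labelled graphs that is invariant
under `l`-`c`-`𝒯`-bisimilarity is definable by a `GML(𝒯)` formula of modal depth (at
most) `l` and counting bound (at most) `c`. -/
theorem invariant_class_definable {AP : Type} [Fintype AP] (𝒯 : Finset Template)
    (l c : ℕ) (hc : 1 ≤ c) (K : Set (LGraph (AP → Bool) × ℕ))
    (hK : ∀ p q : LGraph (AP → Bool) × ℕ, p.2 ∈ p.1.verts → q.2 ∈ q.1.verts →
      BBisimilar 𝒯 l c p.1 p.2 q.1 q.2 → (p ∈ K ↔ q ∈ K)) :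
    ∃ φ : GML AP, φ.Wf 𝒯 ∧ φ.md ≤ l ∧ φ.cb ≤ c ∧
      ∀ p : LGraph (AP → Bool) × ℕ, p.2 ∈ p.1.verts → (p ∈ K ↔ Sat p.1 φ p.2) := by
  classical
  set good : Finset (Ty AP 𝒯 c l) := Finset.univ.filter
    (fun τ => ∃ q : LGraph (AP → Bool) × ℕ,
      q ∈ K ∧ q.2 ∈ q.1.verts ∧ typeOf 𝒯 c l q.1 q.2 = τ) with hgood
  refine ⟨bigDisj (good.toList.map (formOf 𝒯 c l)), ?_, ?_, ?_, ?_⟩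
  · refine wf_bigDisj fun ψ hψ => ?_
    obtain ⟨τ, _, rfl⟩ := List.mem_map.mp hψ
    exact wf_formOf 𝒯 c l τ
  · refine md_bigDisj fun ψ hψ => ?_
    obtain ⟨τ, _, rfl⟩ := List.mem_map.mp hψ
    exact md_formOf 𝒯 c l τ
  · refine cb_bigDisj fun ψ hψ => ?_
    obtain ⟨τ, _, rfl⟩ := List.mem_map.mp hψ
    exact cb_formOf 𝒯 c l τ
  · intro p hp
    rw [sat_bigDisj]
    constructor
    · intro hpK
      refine ⟨formOf 𝒯 c l (typeOf 𝒯 c l p.1 p.2), List.mem_map.mpr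
        ⟨typeOf 𝒯 c l p.1 p.2, Finset.mem_toList.mpr (Finset.mem_filter.mpr
          ⟨Finset.mem_univ _, ⟨p, hpK, hp, rfl⟩⟩), rfl⟩, ?_⟩
      exact (sat_formOf 𝒯 c l _ p.1 p.2).mpr rfl
    · rintro ⟨ψ, hmem, hsat⟩
      obtain ⟨τ, hτ, rfl⟩ := List.mem_map.mp hmem
      obtain ⟨q, hqK, hqv, hqτ⟩ :=
        (Finset.mem_filter.mp (Finset.mem_toList.mp hτ)).2
      have hpt : typeOf 𝒯 c l p.1 p.2 = τ := (sat_formOf 𝒯 c l τ p.1 p.2).mp hsat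
      have hbis : BBisimilar 𝒯 l c q.1 q.2 p.1 p.2 :=
        ⟨fun v v' => typeOf 𝒯 c l q.1 v = typeOf 𝒯 c l p.1 v',
          isBisim_typeOf 𝒯 c q.1 p.1 l, show typeOf 𝒯 c l q.1 q.2 = typeOf 𝒯 c l p.1 p.2 by rw [hqτ, hpt]⟩
      exact (hK q p hqv hp hbis).mp hqK
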